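/- In the GRW specialization of the pointwise model with g(P,P) = −1, ω = 1, and Ric(P,X) = (n−1)·π(X) for all X ∈ V: the Einstein type condition of the zeroth kind Ric⁰ = (r⁰/n)·g holds if and only if Ric = ((n−1)/4)·(5g + π⊗π); and in that case the scalar curvature is the constant 4r = (n−1)(5n−1). -/

import Mathlib

/-- The `g`-trace of a bilinear form `B`: the trace of the endomorphism
`(g♭)⁻¹ ∘ B♭` of `V`, where `B♭ : V → V*` is `X ↦ B(X,·)`. -/
noncomputable def trG {V : Type*} [AddCommGroup V] [Module ℝ V] [FiniteDimensional ℝ V]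
    (g : LinearMap.BilinForm ℝ V) (hg : g.Nondegenerate)
    (B : LinearMap.BilinForm ℝ V) : ℝ :=
  LinearMap.trace ℝ V ((g.toDual hg).symm.toLinearMap ∘ₗ B)

lemma trG_smul {V : Type*} [AddCommGroup V] [Module ℝ V] [FiniteDimensional ℝ V]
    (g : LinearMap.BilinForm ℝ V) (hg : g.Nondegenerate) (c : ℝ)
    (B : LinearMap.BilinForm ℝ V) : trG g hg (c • B) = c * trG g hg B := by
  unfold trG
  rw [LinearMap.comp_smul, map_smul]; rfl

lemma trG_add {V : Type*} [AddCommGroup V] [Module ℝ V] [FiniteDimensional ℝ V]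
    (g : LinearMap.BilinForm ℝ V) (hg : g.Nondegenerate)
    (B C : LinearMap.BilinForm ℝ V) : trG g hg (B + C) = trG g hg B + trG g hg C := by
  unfold trG
  rw [LinearMap.comp_add, map_add]

lemma trG_g {V : Type*} [AddCommGroup V] [Module ℝ V] [FiniteDimensional ℝ V]
    (g : LinearMap.BilinForm ℝ V) (hg : g.Nondegenerate) :
    trG g hg g = (Module.finrank ℝ V : ℝ) := by
  unfold trG
  have h : (g.toDual hg).symm.toLinearMap ∘ₗ g = LinearMap.id := by
    ext x
    have : g.toDual hg x = g x := by
      ext y; exact LinearMap.BilinForm.toDual_def hg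
    simp [← this]
  rw [h, LinearMap.trace_id]

theorem stmt_12 {V : Type*} [AddCommGroup V] [Module ℝ V] [FiniteDimensional ℝ V]
    (n : ℕ) (hn : 3 ≤ n) (hdim : Module.finrank ℝ V = n)
    (g : LinearMap.BilinForm ℝ V) (hg : g.Nondegenerate) (hgs : g.IsSymm)
    (P : V) (hP : g P P = -1) (π : V →ₗ[ℝ] ℝ) (hπ : π = g.flip P)
    (ω : ℝ) (hω : ω = 1)
    (ππ : LinearMap.BilinForm ℝ V) (hππ : ππ = π.smulRight π)
    (Ric : LinearMap.BilinForm ℝ V) (hRicSymm : Ric.IsSymm)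
    (hRicP : ∀ X : V, Ric P X = ((n : ℝ) - 1) * π X)
    (Ric0 : LinearMap.BilinForm ℝ V)
    (hRic0 : Ric0 = Ric - ((((n : ℝ) - 1) / 2) * (3 * ω + π P)) • g - (((n : ℝ) - 1) / 4) • ππ) :
    (Ric0 = (trG g hg Ric0 / (n : ℝ)) • g ↔
      Ric = (((n : ℝ) - 1) / 4) • ((5 : ℝ) • g + ππ)) ∧
    (Ric0 = (trG g hg Ric0 / (n : ℝ)) • g →
      4 * trG g hg Ric = ((n : ℝ) - 1) * (5 * (n : ℝ) - 1)) := by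
  have hn0 : (n : ℝ) ≠ 0 := by positivity
  have hπP : π P = -1 := by rw [hπ]; simpa using hP
  have hπg : g.toDual hg P = π := by
    ext y
    rw [LinearMap.BilinForm.toDual_def hg, hπ]
    simpa using hgs.eq P y
  have hsymmπ : (g.toDual hg).symm π = P := by
    rw [← hπg, LinearEquiv.symm_apply_apply]
  -- trG of ππ is -1
  have htrππ : trG g hg ππ = -1 := by
    unfold trG
    have h : (g.toDual hg).symm.toLinearMap ∘ₗ ππ = dualTensorHom ℝ V V (π ⊗ₜ P) := by
      ext x
      simp [hππ, dualTensorHom_apply, map_smul, hsymmπ]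
    rw [h, LinearMap.trace_eq_contract_apply]
    simp [hπP]
  have htrg : trG g hg g = (n : ℝ) := by rw [trG_g, hdim]
  -- simplify Ric0 definition
  have hRic0' : Ric0 = Ric - ((n : ℝ) - 1) • g - (((n : ℝ) - 1) / 4) • ππ := by
    rw [hRic0, hω, hπP]; ring_nf
  have key : ∀ h : Ric0 = (trG g hg Ric0 / (n : ℝ)) • g,
      Ric = (((n : ℝ) - 1) / 4) • ((5 : ℝ) • g + ππ) := by
    intro h
    -- evaluate at (P,P)
    have hval : Ric0 P P = -(((n : ℝ) - 1) / 4) := by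
      rw [hRic0']
      simp only [LinearMap.sub_apply, LinearMap.smul_apply, smul_eq_mul,
        hRicP P, hππ, LinearMap.smulRight_apply]
      rw [hP, hπP]; ring
    have hval2 : Ric0 P P = (trG g hg Ric0 / (n : ℝ)) * g P P := by
      conv_lhs => rw [h]
      simp
    have hc : trG g hg Ric0 / (n : ℝ) = ((n : ℝ) - 1) / 4 := by
      rw [hval, hP] at hval2
      linarith
    have : Ric0 = (((n : ℝ) - 1) / 4) • g := by rw [h, hc]
    have := hRic0' ▸ this
    -- Ric - (n-1)•g - ((n-1)/4)•ππ = ((n-1)/4)•g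
    have hR : Ric = (((n : ℝ) - 1) / 4) • g + ((n : ℝ) - 1) • g + (((n : ℝ) - 1) / 4) • ππ := by
      rw [← this]; abel
    rw [hR]
    ext x y
    simp only [LinearMap.add_apply, LinearMap.smul_apply, smul_eq_mul]
    ring
  constructor
  · constructor
    · exact key
    · intro hR
      have hRic0'' : Ric0 = (((n : ℝ) - 1) / 4) • g := by
        rw [hRic0', hR]
        ext x y
        simp only [LinearMap.sub_apply, LinearMap.add_apply, LinearMap.smul_apply, smul_eq_mul]
        ring
      have htr0 : trG g hg Ric0 = (((n : ℝ) - 1) / 4) * (n : ℝ) := by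
        rw [hRic0'', trG_smul, htrg]
      have hc : trG g hg Ric0 / (n : ℝ) = ((n : ℝ) - 1) / 4 := by
        rw [htr0]; field_simp
      rw [hc]; exact hRic0''
  · intro h
    have hR := key h
    have : trG g hg Ric = (((n : ℝ) - 1) / 4) * (5 * (n : ℝ) + (-1)) := by
      rw [hR, trG_smul, trG_add, trG_smul, htrg, htrππ]
    rw [this]; ring
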